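/- For every positive integer n, every n×n complex matrix A, and every sign vector x ∈ {−1,1}^n, the Glynn estimator is bounded by the n-th power of the operator norm: |Gly_x(A)| ≤ ‖A‖^n. -/

import Mathlib

set_option maxHeartbeats 1000000

open scoped Matrix.Norms.L2Operator

/-- The Glynn estimator of an `n × n` complex matrix `A` at a sign vector `x`:
`Gly_x(A) = x_1 ⋯ x_n ∏_i (a_{i,1} x_1 + ⋯ + a_{i,n} x_n)`. -/
noncomputable def glynn {n : ℕ} (A : Matrix (Fin n) (Fin n) ℂ) (x : Fin n → ℂ) : ℂ :=
  (∏ i, x i) * ∏ i, ∑ j, A i j * x j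

theorem aux_sum_le {n : ℕ} (A : Matrix (Fin n) (Fin n) ℂ) (x : Fin n → ℂ)
    (hxabs : ∀ i, ‖x i‖ = 1) :
    ∑ i, ‖A.mulVec x i‖ ^ 2 ≤ ‖A‖ ^ 2 * n := by
  have hxnorm : ‖(EuclideanSpace.equiv (Fin n) ℂ).symm x‖ = Real.sqrt n := by
    rw [EuclideanSpace.norm_eq]
    congr 1
    have h : ∀ i ∈ Finset.univ, ‖((EuclideanSpace.equiv (Fin n) ℂ).symm x) i‖ ^ 2 = 1 := by
      intro i _
      simp [hxabs i]
    rw [Finset.sum_congr rfl h]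
    simp
  have hnormy : ‖(EuclideanSpace.equiv (Fin n) ℂ).symm (A.mulVec x)‖
      ≤ ‖A‖ * ‖(EuclideanSpace.equiv (Fin n) ℂ).symm x‖ :=
    A.l2_opNorm_mulVec ((EuclideanSpace.equiv (Fin n) ℂ).symm x)
  have h1 : ∑ i, ‖A.mulVec x i‖ ^ 2
      = ‖(EuclideanSpace.equiv (Fin n) ℂ).symm (A.mulVec x)‖ ^ 2 := by
    rw [EuclideanSpace.norm_eq, Real.sq_sqrt (by positivity)]
    simp
  have h2 : (‖A‖ * ‖(EuclideanSpace.equiv (Fin n) ℂ).symm x‖) ^ 2 = ‖A‖ ^ 2 * n := by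
    rw [mul_pow, hxnorm, Real.sq_sqrt (by positivity)]
  rw [h1, ← h2]
  exact pow_le_pow_left₀ (norm_nonneg _) hnormy 2

/-- For every positive `n`, every `n × n` complex matrix `A` and every sign vector
`x ∈ {-1, 1}ⁿ`, the Glynn estimator is bounded by the `n`-th power of the ℓ² → ℓ²
operator norm of `A`: `|Gly_x(A)| ≤ ‖A‖ⁿ`. -/
theorem abs_glynn_le_opNorm_pow (n : ℕ) (hn : 0 < n) (A : Matrix (Fin n) (Fin n) ℂ)
    (x : Fin n → ℂ) (hx : ∀ i, x i = -1 ∨ x i = 1) :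
    ‖glynn A x‖ ≤ ‖A‖ ^ n := by
  have hxabs : ∀ i, ‖x i‖ = 1 := by
    intro i
    rcases hx i with h | h <;> simp [h]
  have hA0 : (0 : ℝ) ≤ ‖A‖ := norm_nonneg _
  have habs : ‖glynn A x‖ = ∏ i, ‖A.mulVec x i‖ := by
    unfold glynn
    rw [norm_mul, norm_prod, norm_prod]
    simp [hxabs, Matrix.mulVec, dotProduct]
  rw [habs]
  have hsum := aux_sum_le A x hxabs
  -- AM-GM
  set z : Fin n → ℝ := fun i => ‖A.mulVec x i‖ ^ 2 with hz
  have hz0 : ∀ i ∈ Finset.univ, (0 : ℝ) ≤ z i := fun i _ => by positivity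
  have hw0 : ∀ i ∈ (Finset.univ : Finset (Fin n)), (0 : ℝ) ≤ (n : ℝ)⁻¹ := fun i _ => by positivity
  have hw1 : ∑ _i : Fin n, (n : ℝ)⁻¹ = 1 := by
    rw [Finset.sum_const, Finset.card_univ, Fintype.card_fin, nsmul_eq_mul]
    field_simp
  have hamgm := Real.geom_mean_le_arith_mean_weighted Finset.univ
      (fun _ => (n : ℝ)⁻¹) z hw0 hw1 hz0
  have hrhs : ∑ i, (n : ℝ)⁻¹ * z i ≤ ‖A‖ ^ 2 := by
    rw [← Finset.mul_sum]
    rw [inv_mul_le_iff₀ (by positivity)]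
    calc ∑ i, z i ≤ ‖A‖ ^ 2 * n := hsum
      _ = n * ‖A‖ ^ 2 := by ring
  have hlhs : ∏ i, z i ^ ((n : ℝ)⁻¹) = (∏ i, z i) ^ ((n : ℝ)⁻¹) := by
    rw [← Real.finset_prod_rpow _ _ hz0]
  have hkey : (∏ i, z i) ^ ((n : ℝ)⁻¹) ≤ ‖A‖ ^ 2 := le_trans (hlhs ▸ hamgm) hrhs
  have hprodz0 : (0 : ℝ) ≤ ∏ i, z i := Finset.prod_nonneg hz0
  have hpow : ∏ i, z i ≤ (‖A‖ ^ 2) ^ n := by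
    have h := Real.rpow_le_rpow (Real.rpow_nonneg hprodz0 _) hkey
      (le_of_lt (by positivity : (0:ℝ) < (n:ℝ)))
    rwa [← Real.rpow_mul hprodz0, inv_mul_cancel₀ (by positivity : (n : ℝ) ≠ 0),
      Real.rpow_one, Real.rpow_natCast] at h
  have hfinal : (∏ i, ‖A.mulVec x i‖) ^ 2 ≤ (‖A‖ ^ n) ^ 2 := by
    calc (∏ i, ‖A.mulVec x i‖) ^ 2 = ∏ i, z i := by
          rw [← Finset.prod_pow]
      _ ≤ (‖A‖ ^ 2) ^ n := hpow
      _ = (‖A‖ ^ n) ^ 2 := by rw [← pow_mul, ← pow_mul, Nat.mul_comm]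
  have h1 : (0 : ℝ) ≤ ∏ i, ‖A.mulVec x i‖ :=
    Finset.prod_nonneg fun i _ => norm_nonneg _
  exact (pow_le_pow_iff_left₀ h1 (by positivity) (by norm_num)).mp hfinal
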